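/- Let S = (s_1, …, s_k) be a duplicate-free list of products and let 1 ≤ m ≤ k. Writing S_{≤m} = (s_1,…,s_m) and S_{>m} = (s_{m+1},…,s_k), and Θ_m = Π_{j<m} θ_{s_j}, the following decomposition inequality holds: f(S) ≤ f(S_{≤m}) + Θ_m · θ_{s_m} · f(S_{>m}). -/

import Mathlib

/-- MNL expected revenue of a finite set `S` of products, where product `i`
has revenue `α i` and preference weight `β i`. -/
noncomputable def g (α β : ℕ → ℝ) (S : Finset ℕ) : ℝ :=
  (∑ i ∈ S, α i * β i) / ((∑ i ∈ S, β i) + 1)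

/-- Reachability of (0-based) position `t` of the sequence `S` under the
cascade browse model: the product of the continuation probabilities of all
earlier products. -/
noncomputable def reach (θ : ℕ → ℝ) (S : List ℕ) (t : ℕ) : ℝ :=
  ∏ j ∈ Finset.range t, θ (S.getD j 0)

/-- Expected revenue of a sequence of products `S` under the cascade browse
model combined with the MNL choice model. -/
noncomputable def f (α β θ : ℕ → ℝ) (S : List ℕ) : ℝ :=
  (∑ t ∈ Finset.range (S.length - 1),
      reach θ S t * (1 - θ (S.getD t 0)) * g α β (S.take (t + 1)).toFinset)
    + reach θ S (S.length - 1) * g α β S.toFinset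

section helpers
variable {α β θ : ℕ → ℝ}

lemma g_nonneg (hα : ∀ i, 0 ≤ α i) (hβ : ∀ i, 0 ≤ β i) (S : Finset ℕ) :
    0 ≤ g α β S := by
  apply div_nonneg
  · exact Finset.sum_nonneg fun i _ => mul_nonneg (hα i) (hβ i)
  · have := Finset.sum_nonneg (s := S) fun i _ => hβ i
    linarith

lemma g_union_le (hα : ∀ i, 0 ≤ α i) (hβ : ∀ i, 0 ≤ β i) {A B : Finset ℕ}
    (h : Disjoint A B) : g α β (A ∪ B) ≤ g α β A + g α β B := by
  have ha : 0 ≤ ∑ i ∈ A, α i * β i := Finset.sum_nonneg fun i _ => mul_nonneg (hα i) (hβ i)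
  have hb : 0 ≤ ∑ i ∈ B, α i * β i := Finset.sum_nonneg fun i _ => mul_nonneg (hα i) (hβ i)
  have hwa : 0 ≤ ∑ i ∈ A, β i := Finset.sum_nonneg fun i _ => hβ i
  have hwb : 0 ≤ ∑ i ∈ B, β i := Finset.sum_nonneg fun i _ => hβ i
  unfold g
  rw [Finset.sum_union h, Finset.sum_union h]
  have h1 : (∑ i ∈ A, α i * β i) / ((∑ i ∈ A, β i) + (∑ i ∈ B, β i) + 1)
      ≤ (∑ i ∈ A, α i * β i) / ((∑ i ∈ A, β i) + 1) :=
    div_le_div_of_nonneg_left ha (by linarith) (by linarith)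
  have h2 : (∑ i ∈ B, α i * β i) / ((∑ i ∈ A, β i) + (∑ i ∈ B, β i) + 1)
      ≤ (∑ i ∈ B, α i * β i) / ((∑ i ∈ B, β i) + 1) :=
    div_le_div_of_nonneg_left hb (by linarith) (by linarith)
  rw [add_div]
  linarith

lemma reach_nonneg (hθ : ∀ i, 0 ≤ θ i ∧ θ i ≤ 1) (S : List ℕ) (t : ℕ) :
    0 ≤ reach θ S t := Finset.prod_nonneg fun j _ => (hθ _).1

lemma reach_succ (S : List ℕ) (t : ℕ) :
    reach θ S (t + 1) = reach θ S t * θ (S.getD t 0) := Finset.prod_range_succ _ _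

lemma reach_take {S : List ℕ} {m t : ℕ} (h : t ≤ m) :
    reach θ (S.take m) t = reach θ S t := by
  apply Finset.prod_congr rfl
  intro j hj
  rw [Finset.mem_range] at hj
  rw [List.getD_eq_getElem?_getD, List.getD_eq_getElem?_getD, List.getElem?_take]
  simp [lt_of_lt_of_le hj h]

lemma reach_add (S : List ℕ) (m r : ℕ) :
    reach θ S (m + r) = reach θ S m * reach θ (S.drop m) r := by
  unfold reach
  rw [Finset.prod_range_add]
  congr 1
  refine Finset.prod_congr rfl fun j _ => ?_
  rw [List.getD_eq_getElem?_getD, List.getD_eq_getElem?_getD, List.getElem?_drop]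

lemma getD_drop (S : List ℕ) (m j : ℕ) : (S.drop m).getD j 0 = S.getD (m + j) 0 := by
  rw [List.getD_eq_getElem?_getD, List.getD_eq_getElem?_getD, List.getElem?_drop]

lemma getD_take {S : List ℕ} {m j : ℕ} (h : j < m) : (S.take m).getD j 0 = S.getD j 0 := by
  rw [List.getD_eq_getElem?_getD, List.getD_eq_getElem?_getD, List.getElem?_take]
  simp [h]

lemma f_nil : f α β θ [] = 0 := by
  simp [f, g, reach]

end helpers

/-- Auxiliary "excess" term used in the decomposition proof. -/
noncomputable def Eaux (α β θ : ℕ → ℝ) (B : List ℕ) (Θ : ℝ) : ℕ → ℝ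
  | 0 => 0
  | (t + 1) => Θ * (reach θ B t * (1 - θ (B.getD t 0)) * g α β (B.take (t + 1)).toFinset)


/-- decomposition inequality
`f S ≤ f S_{≤m} + Θ_m · θ_{s_m} · f S_{>m}` for `1 ≤ m ≤ |S|`. -/
theorem stmt4 (α β θ : ℕ → ℝ) (hα : ∀ i, 0 ≤ α i) (hβ : ∀ i, 0 ≤ β i)
    (hθ : ∀ i, 0 ≤ θ i ∧ θ i ≤ 1)
    (S : List ℕ) (hnd : S.Nodup) (m : ℕ) (hm1 : 1 ≤ m) (hm2 : m ≤ S.length) :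
    f α β θ S ≤ f α β θ (S.take m)
      + reach θ S (m - 1) * θ (S.getD (m - 1) 0) * f α β θ (S.drop m) := by
  obtain ⟨m', rfl⟩ : ∃ m', m = m' + 1 := ⟨m - 1, (Nat.succ_pred_eq_of_pos hm1).symm⟩
  obtain ⟨n, hk⟩ := Nat.exists_eq_add_of_le hm2
  simp only [Nat.add_sub_cancel]
  rcases n with _ | n'
  · rw [List.take_of_length_le (by omega), List.drop_eq_nil_of_le (by omega), f_nil,
      mul_zero, add_zero]
  -- main case: S.length = (m'+1) + (n'+1)
  set A := S.take (m' + 1) with hA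
  set B := S.drop (m' + 1) with hB
  have hAlen : A.length = m' + 1 := by rw [hA, List.length_take]; omega
  have hBlen : B.length = n' + 1 := by rw [hB, List.length_drop]; omega
  have hAB : A ++ B = S := List.take_append_drop _ _
  have hdisjL : A.Disjoint B := by
    have h := hnd
    rw [← hAB] at h
    intro a ha hb
    exact ((List.nodup_append).1 h).2.2 a ha a hb rfl
  have hdisj : ∀ L : List ℕ, L ⊆ B → Disjoint A.toFinset L.toFinset := by
    intro L hL
    rw [List.disjoint_toFinset_iff_disjoint]
    exact fun a ha hb => hdisjL ha (hL hb)
  have hgA : 0 ≤ g α β A.toFinset := g_nonneg hα hβ _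
  -- split union bound for prefixes extending past A
  have hsplit : ∀ r : ℕ, g α β (S.take (m' + 1 + r)).toFinset
      ≤ g α β A.toFinset + g α β ((B.take r).toFinset) := by
    intro r
    rw [List.take_add, List.toFinset_append]
    exact g_union_le hα hβ (hdisj _ (List.take_subset _ _))
  -- unfolded forms
  have hfS : f α β θ S =
      (∑ t ∈ Finset.range m',
          reach θ S t * (1 - θ (S.getD t 0)) * g α β (S.take (t + 1)).toFinset)
        + ((∑ t ∈ Finset.range (n' + 1),
            reach θ S (m' + t) * (1 - θ (S.getD (m' + t) 0))
              * g α β (S.take (m' + t + 1)).toFinset)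
          + reach θ S (m' + (n' + 1)) * g α β S.toFinset) := by
    rw [f, hk, show m' + 1 + (n' + 1) - 1 = m' + (n' + 1) from by omega,
      Finset.sum_range_add, add_assoc]
  have hfA : f α β θ A =
      (∑ t ∈ Finset.range m',
          reach θ S t * (1 - θ (S.getD t 0)) * g α β (S.take (t + 1)).toFinset)
        + reach θ S m' * g α β A.toFinset := by
    rw [f, hAlen]
    simp only [Nat.add_sub_cancel]
    congr 1
    · refine Finset.sum_congr rfl fun t ht => ?_
      rw [Finset.mem_range] at ht
      rw [reach_take (by omega), getD_take (by omega), hA, List.take_take,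
        min_eq_left (by omega)]
    · rw [reach_take (by omega)]
  have hfB : f α β θ B =
      (∑ t ∈ Finset.range n',
          reach θ B t * (1 - θ (B.getD t 0)) * g α β (B.take (t + 1)).toFinset)
        + reach θ B n' * g α β B.toFinset := by
    rw [f, hBlen]
    simp only [Nat.add_sub_cancel]
  set Θ : ℝ := reach θ S (m' + 1) with hΘ
  have hΘeq : Θ = reach θ S m' * θ (S.getD m' 0) := reach_succ S m'
  have hΘnn : 0 ≤ Θ := reach_nonneg hθ S _
  -- per-term bound
  have key : ∀ t ∈ Finset.range (n' + 1),
      reach θ S (m' + t) * (1 - θ (S.getD (m' + t) 0)) * g α β (S.take (m' + t + 1)).toFinset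
        ≤ (reach θ S (m' + t) - reach θ S (m' + t + 1)) * g α β A.toFinset
            + Eaux α β θ B Θ t := by
    rintro (_ | t') -
    · simp only [Nat.add_zero, Eaux, add_zero]
      rw [reach_succ]
      have : S.take (m' + 1) = A := rfl
      rw [this]
      ring_nf
      exact le_refl _
    · have h1 : m' + (t' + 1) = m' + 1 + t' := by omega
      have hre : reach θ S (m' + (t' + 1)) = Θ * reach θ B t' := by
        rw [h1, reach_add]
      have hgd : S.getD (m' + (t' + 1)) 0 = B.getD t' 0 := by
        rw [h1, ← getD_drop]
      have hθt := hθ (B.getD t' 0)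
      have hfac : 0 ≤ reach θ S (m' + (t' + 1)) * (1 - θ (S.getD (m' + (t' + 1)) 0)) := by
        apply mul_nonneg (reach_nonneg hθ S _)
        rw [hgd]; linarith [hθt.2]
      calc reach θ S (m' + (t' + 1)) * (1 - θ (S.getD (m' + (t' + 1)) 0))
            * g α β (S.take (m' + (t' + 1) + 1)).toFinset
          ≤ reach θ S (m' + (t' + 1)) * (1 - θ (S.getD (m' + (t' + 1)) 0))
            * (g α β A.toFinset + g α β ((B.take (t' + 1)).toFinset)) := by
            apply mul_le_mul_of_nonneg_left _ hfac
            have := hsplit (t' + 1)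
            rw [show m' + 1 + (t' + 1) = m' + (t' + 1) + 1 from by omega] at this
            exact this
        _ = (reach θ S (m' + (t' + 1)) - reach θ S (m' + (t' + 1) + 1)) * g α β A.toFinset
              + Eaux α β θ B Θ (t' + 1) := by
            rw [Eaux, reach_succ S (m' + (t' + 1)), hre, hgd]
            ring
  -- bound for the final term
  have hfinal : reach θ S (m' + (n' + 1)) * g α β S.toFinset
      ≤ reach θ S (m' + (n' + 1)) * g α β A.toFinset
        + Θ * (reach θ B n' * g α β B.toFinset) := by
    have hgS : g α β S.toFinset ≤ g α β A.toFinset + g α β B.toFinset := by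
      rw [← hAB, List.toFinset_append]
      exact g_union_le hα hβ (hdisj _ (fun _ h => h))
    have hre : reach θ S (m' + (n' + 1)) = Θ * reach θ B n' := by
      rw [show m' + (n' + 1) = m' + 1 + n' from by omega, reach_add]
    calc reach θ S (m' + (n' + 1)) * g α β S.toFinset
        ≤ reach θ S (m' + (n' + 1)) * (g α β A.toFinset + g α β B.toFinset) :=
          mul_le_mul_of_nonneg_left hgS (reach_nonneg hθ S _)
      _ = reach θ S (m' + (n' + 1)) * g α β A.toFinset
            + Θ * (reach θ B n' * g α β B.toFinset) := by rw [hre]; ring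
  -- sum of Eaux
  have hEsum : ∑ t ∈ Finset.range (n' + 1), Eaux α β θ B Θ t
      = Θ * ∑ t ∈ Finset.range n',
          reach θ B t * (1 - θ (B.getD t 0)) * g α β (B.take (t + 1)).toFinset := by
    rw [Finset.sum_range_succ']
    simp only [Eaux, add_zero]
    rw [← Finset.mul_sum]
  -- telescoping
  have htel : ∑ t ∈ Finset.range (n' + 1),
      (reach θ S (m' + t) - reach θ S (m' + t + 1))
      = reach θ S m' - reach θ S (m' + (n' + 1)) := by
    have := Finset.sum_range_sub' (fun i => reach θ S (m' + i)) (n' + 1)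
    simpa [add_assoc] using this
  -- put it together
  have hmain : (∑ t ∈ Finset.range (n' + 1),
        reach θ S (m' + t) * (1 - θ (S.getD (m' + t) 0))
          * g α β (S.take (m' + t + 1)).toFinset)
      + reach θ S (m' + (n' + 1)) * g α β S.toFinset
      ≤ reach θ S m' * g α β A.toFinset + Θ * f α β θ B := by
    have h1 := Finset.sum_le_sum key
    rw [Finset.sum_add_distrib, ← Finset.sum_mul, htel, hEsum] at h1
    rw [hfB]
    have := hfinal
    nlinarith [this, h1]
  rw [hfS, hfA, ← hΘeq]
  linarith [hmain]
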